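/- Let Q ≥ 1, let t_0,…,t_{Q-1} be the zeros of the Legendre polynomial P_Q with associated Gauss–Legendre weights ω_0,…,ω_{Q-1}, and let m ≥ 0. Then for all integers n, n' with m ≤ n, n' ≤ Q-1 satisfying n + n' ≤ 2Q - 1, Σ_{k=0}^{Q-1} ω_k P_{n,m}(t_k) P_{n',m}(t_k) = (2/(2n+1)) · ((n+m)!/(n-m)!) · δ_{n}^{n'}. -/

import Mathlib

open Polynomial

/-- The Legendre polynomial `P_n`, via the Rodrigues formula. -/
noncomputable def legendreP (n : ℕ) : Polynomial ℝ :=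
  Polynomial.C (1 / ((2 : ℝ) ^ n * (Nat.factorial n : ℝ))) *
    Polynomial.derivative^[n] ((Polynomial.X ^ 2 - 1) ^ n)

/-- The associated Legendre function `P_{n,m}` (without the Condon–Shortley phase). -/
noncomputable def assocLegendre (n m : ℕ) (t : ℝ) : ℝ :=
  (Real.sqrt (1 - t ^ 2)) ^ m * Polynomial.eval t (Polynomial.derivative^[m] (legendreP n))

namespace AL

noncomputable abbrev u (n k : ℕ) : Polynomial ℝ := derivative^[k] (((X:Polynomial ℝ)^2-1)^n)
noncomputable abbrev p (n k : ℕ) : Polynomial ℝ := derivative^[k] (legendreP n)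

lemma u_succ (n k : ℕ) : u n (k+1) = derivative (u n k) := Function.iterate_succ_apply' _ _ _
lemma p_succ (n k : ℕ) : p n (k+1) = derivative (p n k) := Function.iterate_succ_apply' _ _ _

/-! ### Integration lemmas -/

lemma integ_deriv (q : Polynomial ℝ) :
    ∫ x in (-1:ℝ)..1, (derivative q).eval x = q.eval 1 - q.eval (-1) := by
  apply intervalIntegral.integral_eq_sub_of_hasDerivAt (fun x _ => q.hasDerivAt x)
  exact (Polynomial.continuous _).intervalIntegrable _ _

/-- integration by parts for polynomials on `[-1,1]` with equal boundary values -/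
lemma ibp (a b : Polynomial ℝ) (h : (a * b).eval 1 = (a * b).eval (-1)) :
    ∫ x in (-1:ℝ)..1, (a * derivative b).eval x
      = - ∫ x in (-1:ℝ)..1, (derivative a * b).eval x := by
  have h1 := integ_deriv (a * b)
  rw [derivative_mul] at h1
  have h2 : ∫ x in (-1:ℝ)..1, (derivative a * b + a * derivative b).eval x
      = (∫ x in (-1:ℝ)..1, (derivative a * b).eval x)
        + ∫ x in (-1:ℝ)..1, (a * derivative b).eval x := by
    simp only [eval_add]
    exact intervalIntegral.integral_add
      ((Polynomial.continuous _).intervalIntegrable _ _)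
      ((Polynomial.continuous _).intervalIntegrable _ _)
  rw [h2, h] at h1; linarith

lemma eval_u_zero (n k : ℕ) (hk : k < n) (x : ℝ) (hx : x^2 = 1) :
    (u n k).eval x = 0 := by
  obtain ⟨r, hr⟩ := pow_sub_dvd_iterate_derivative_pow ((X:Polynomial ℝ)^2-1) n k
  show (derivative^[k] (((X:Polynomial ℝ)^2-1)^n)).eval x = 0
  rw [hr, eval_mul, eval_pow]
  have : ((X:Polynomial ℝ)^2-1).eval x = 0 := by simp [hx]
  rw [this, zero_pow (by omega), zero_mul]

/-- iterated integration by parts against the Rodrigues kernel -/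
lemma rodrigues_ibp (n : ℕ) : ∀ k ≤ n, ∀ q : Polynomial ℝ,
    ∫ x in (-1:ℝ)..1, ((u n n) * q).eval x
      = (-1:ℝ)^k * ∫ x in (-1:ℝ)..1, ((u n (n-k)) * derivative^[k] q).eval x := by
  intro k
  induction k with
  | zero => intro _ q; simp
  | succ k ih =>
    intro hk q
    rw [ih (by omega) q]
    have hnk : n - k = (n - (k+1)) + 1 := by omega
    have e1 : u n (n-k) = derivative (u n (n-(k+1))) := by
      rw [hnk, u_succ]
    set A := u n (n-(k+1)) with hA
    have hbd : ∀ x : ℝ, x^2 = 1 → A.eval x = 0 := fun x hx =>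
      eval_u_zero n _ (by omega) x hx
    have : ∫ x in (-1:ℝ)..1, ((derivative A) * derivative^[k] q).eval x
        = - ∫ x in (-1:ℝ)..1, (A * derivative^[k+1] q).eval x := by
      have := ibp (derivative^[k] q) A (by
        simp only [eval_mul, hbd 1 (by norm_num), hbd (-1) (by norm_num), mul_zero])
      have hcomm : ∀ r s : Polynomial ℝ, ∫ x in (-1:ℝ)..1, (r * s).eval x
          = ∫ x in (-1:ℝ)..1, (s * r).eval x := by
        intro r s; rw [mul_comm]
      rw [hcomm (derivative^[k] q) (derivative A)] at this
      rw [this, hcomm, Function.iterate_succ_apply']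
    rw [e1, this]
    ring

/-! ### Degrees and the top derivative -/

lemma natDegree_w (n : ℕ) : (((X:Polynomial ℝ)^2-1)^n).natDegree = 2*n := by
  rw [natDegree_pow]
  have : ((X:Polynomial ℝ)^2-1) = X^2 - C 1 := by simp
  rw [this, natDegree_X_pow_sub_C]; ring

lemma coeff_w (n : ℕ) : (((X:Polynomial ℝ)^2-1)^n).coeff (2*n) = 1 := by
  have h : (((X:Polynomial ℝ)^2-1)^n).Monic := by
    apply Monic.pow
    have : ((X:Polynomial ℝ)^2-1) = X^2 - C 1 := by simp
    rw [this]
    exact monic_X_pow_sub_C 1 (by norm_num)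
  have := h.leadingCoeff
  rwa [leadingCoeff, natDegree_w] at this

lemma iter_deriv_w (n : ℕ) :
    derivative^[2*n] (((X:Polynomial ℝ)^2-1)^n) = C ((Nat.factorial (2*n) : ℝ)) := by
  have hdeg : (derivative^[2*n] (((X:Polynomial ℝ)^2-1)^n)).natDegree ≤ 0 := by
    have := natDegree_iterate_derivative (((X:Polynomial ℝ)^2-1)^n) (2*n)
    rw [natDegree_w] at this; omega
  rw [Polynomial.eq_C_of_natDegree_le_zero hdeg]
  congr 1
  rw [coeff_iterate_derivative]
  simp [coeff_w, Nat.descFactorial_self]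

/-! ### The integral of `(x²-1)ⁿ` -/

lemma key_id (j : ℕ) :
    derivative ((X:Polynomial ℝ) * ((X:Polynomial ℝ)^2-1)^(j+1))
      = C ((2*(j+1)+1 : ℕ) : ℝ) * ((X:Polynomial ℝ)^2-1)^(j+1)
        + C ((2*(j+1) : ℕ) : ℝ) * ((X:Polynomial ℝ)^2-1)^j := by
  rw [derivative_mul, derivative_X, derivative_pow]
  simp only [derivative_sub, derivative_one, derivative_X_pow, map_natCast,
    Nat.add_sub_cancel, sub_zero]
  push_cast
  ring

lemma int_w (n : ℕ) :
    ∫ x in (-1:ℝ)..1, (((X:Polynomial ℝ)^2-1)^n).eval x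
      = (-1:ℝ)^n * 2^(2*n+1) * (Nat.factorial n : ℝ)^2 / (Nat.factorial (2*n+1) : ℝ) := by
  induction n with
  | zero => simp; norm_num
  | succ j ih =>
    have h0 := integ_deriv ((X:Polynomial ℝ) * ((X:Polynomial ℝ)^2-1)^(j+1))
    have hz : (((X:Polynomial ℝ) * ((X:Polynomial ℝ)^2-1)^(j+1))).eval 1 = 0 ∧
        (((X:Polynomial ℝ) * ((X:Polynomial ℝ)^2-1)^(j+1))).eval (-1) = 0 := by
      constructor <;> simp
    rw [hz.1, hz.2, sub_zero] at h0
    rw [key_id j] at h0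
    have hsplit : ∫ x in (-1:ℝ)..1,
        (C ((2*(j+1)+1 : ℕ) : ℝ) * ((X:Polynomial ℝ)^2-1)^(j+1)
          + C ((2*(j+1) : ℕ) : ℝ) * ((X:Polynomial ℝ)^2-1)^j).eval x
        = ((2*(j+1)+1 : ℕ) : ℝ) * (∫ x in (-1:ℝ)..1, (((X:Polynomial ℝ)^2-1)^(j+1)).eval x)
          + ((2*(j+1) : ℕ) : ℝ) * ∫ x in (-1:ℝ)..1, (((X:Polynomial ℝ)^2-1)^j).eval x := by
      simp only [eval_add, eval_mul, eval_C]
      rw [intervalIntegral.integral_add,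
        intervalIntegral.integral_const_mul, intervalIntegral.integral_const_mul]
      all_goals exact (continuous_const.mul (Polynomial.continuous _)).intervalIntegrable _ _
    rw [hsplit, ih] at h0
    have hfact : (Nat.factorial (2*(j+1)+1) : ℝ)
        = ((2*(j+1)+1 : ℕ) : ℝ) * ((2*(j+1) : ℕ) : ℝ) * (Nat.factorial (2*j+1) : ℝ) := by
      have e1 : 2*(j+1)+1 = (2*(j+1)) + 1 := rfl
      rw [e1, Nat.factorial_succ]
      have e2 : 2*(j+1) = (2*j+1) + 1 := by ring
      rw [e2, Nat.factorial_succ]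
      push_cast; ring
    have hfj : (Nat.factorial (j+1) : ℝ) = ((j:ℝ)+1) * (Nat.factorial j : ℝ) := by
      rw [Nat.factorial_succ]; push_cast; ring
    have hne1 : (Nat.factorial (2*j+1) : ℝ) ≠ 0 := Nat.cast_ne_zero.mpr (Nat.factorial_ne_zero _)
    have hne2 : ((2*(j+1)+1 : ℕ) : ℝ) ≠ 0 := by positivity
    have hI : (∫ x in (-1:ℝ)..1, (((X:Polynomial ℝ)^2-1)^(j+1)).eval x)
        = -(((2*(j+1) : ℕ) : ℝ) / ((2*(j+1)+1 : ℕ) : ℝ))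
            * ((-1:ℝ)^j * 2^(2*j+1) * (Nat.factorial j : ℝ)^2 / (Nat.factorial (2*j+1) : ℝ)) := by
      field_simp at h0 ⊢
      linarith
    rw [hI, hfact, hfj]
    field_simp
    push_cast; ring

/-! ### Orthogonality of the Legendre polynomials -/

lemma legendreP_def' (n : ℕ) : legendreP n
    = C (1 / ((2 : ℝ) ^ n * (Nat.factorial n : ℝ))) * u n n := rfl

lemma integ_legendre_mul (n n' : ℕ) :
    ∫ x in (-1:ℝ)..1, (legendreP n * legendreP n').eval x
      = (1 / ((2 : ℝ) ^ n * (Nat.factorial n : ℝ))) * (1 / ((2 : ℝ) ^ n' * (Nat.factorial n' : ℝ)))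
        * ∫ x in (-1:ℝ)..1, ((u n n) * (u n' n')).eval x := by
  rw [← intervalIntegral.integral_const_mul]
  apply intervalIntegral.integral_congr
  intro x _
  simp only [legendreP_def', eval_mul, eval_C]
  ring

lemma legendre_cross (n n' : ℕ) (h : n' < n) :
    ∫ x in (-1:ℝ)..1, ((u n n) * (u n' n')).eval x = 0 := by
  rw [rodrigues_ibp n n le_rfl _]
  have : derivative^[n] (u n' n') = derivative^[n + n'] (((X:Polynomial ℝ)^2-1)^n') := by
    show _ = derivative^[n+n'] _
    rw [← Function.iterate_add_apply, Nat.add_comm]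
  rw [this, Polynomial.iterate_derivative_eq_zero (p := ((X:Polynomial ℝ)^2-1)^n')
    (x := n + n') (by rw [natDegree_w]; omega)]
  simp

lemma legendre_diag (n : ℕ) :
    ∫ x in (-1:ℝ)..1, (legendreP n * legendreP n).eval x = 2 / (2*(n:ℝ)+1) := by
  rw [integ_legendre_mul, rodrigues_ibp n n le_rfl _]
  have e1 : derivative^[n] (u n n) = derivative^[2*n] (((X:Polynomial ℝ)^2-1)^n) := by
    show _ = _
    rw [← Function.iterate_add_apply]; norm_num; ring_nf
  rw [Nat.sub_self, e1, iter_deriv_w]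
  have e2 : ∫ x in (-1:ℝ)..1,
      ((u n 0) * C ((Nat.factorial (2*n) : ℝ))).eval x
      = (Nat.factorial (2*n) : ℝ) * ∫ x in (-1:ℝ)..1, (((X:Polynomial ℝ)^2-1)^n).eval x := by
    rw [← intervalIntegral.integral_const_mul]
    apply intervalIntegral.integral_congr
    intro x _
    simp only [eval_mul, eval_C, Function.iterate_zero_apply, eval_pow, eval_sub, eval_one, eval_X]
    ring
  rw [e2, int_w]
  have h1 : ((2:ℝ)^n) ≠ 0 := by positivity
  have h2 : (Nat.factorial n : ℝ) ≠ 0 := Nat.cast_ne_zero.mpr (Nat.factorial_ne_zero _)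
  have h3 : (Nat.factorial (2*n+1) : ℝ) = (2*(n:ℝ)+1) * (Nat.factorial (2*n) : ℝ) := by
    rw [Nat.factorial_succ]; push_cast; ring
  have h4 : (Nat.factorial (2*n) : ℝ) ≠ 0 := Nat.cast_ne_zero.mpr (Nat.factorial_ne_zero _)
  have h5 : (2*(n:ℝ)+1) ≠ 0 := by positivity
  rw [h3]
  have h6 : ((-1:ℝ))^(n*2) = 1 := by rw [pow_mul']; norm_num
  field_simp
  ring_nf
  rw [h6]
  ring

lemma legendre_orth (n n' : ℕ) :
    ∫ x in (-1:ℝ)..1, (legendreP n * legendreP n').eval x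
      = if n = n' then 2 / (2*(n:ℝ)+1) else 0 := by
  rcases eq_or_ne n n' with h | h
  · subst h; rw [if_pos rfl]; exact legendre_diag n
  · rw [if_neg h]
    rcases lt_or_gt_of_ne h with hlt | hlt
    · have : ∫ x in (-1:ℝ)..1, (legendreP n * legendreP n').eval x
          = ∫ x in (-1:ℝ)..1, (legendreP n' * legendreP n).eval x := by rw [mul_comm]
      rw [this, integ_legendre_mul, legendre_cross n' n hlt, mul_zero]
    · rw [integ_legendre_mul, legendre_cross n n' hlt, mul_zero]

/-! ### The Legendre ODE -/

lemma s0 (n : ℕ) : ((X:Polynomial ℝ)^2-1) * u n 1 = C (2*(n:ℝ)) * X * u n 0 := by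
  cases n with
  | zero =>
    rw [u_succ, show u 0 0 = 1 from pow_zero _]
    simp
  | succ j =>
    simp only [u, Function.iterate_one, Function.iterate_zero_apply, derivative_pow,
      derivative_sub, derivative_one, derivative_X_pow, sub_zero]
    rw [show j + 1 - 1 = j from rfl]
    have h : ((X:Polynomial ℝ)^2-1)^(j+1) = ((X:Polynomial ℝ)^2-1)^j * ((X:Polynomial ℝ)^2-1) := by
      ring
    rw [h, derivative_X]
    simp only [map_mul, map_sub, map_add, map_one, map_zero, map_ofNat,
      Polynomial.C_eq_natCast]
    push_cast
    ring

lemma Tk (n : ℕ) : ∀ k : ℕ, ((X:Polynomial ℝ)^2-1) * u n (k+2)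
    = C (2*((n:ℝ)-(k+1))) * X * u n (k+1) + C (((k:ℝ)+1)*(2*(n:ℝ)-k)) * u n k := by
  intro k
  induction k with
  | zero =>
    have hd := congrArg derivative (s0 n)
    simp only [derivative_mul, derivative_sub, derivative_one, derivative_X_pow, derivative_X,
      sub_zero, derivative_C, ← u_succ, zero_mul, mul_one] at hd
    simp only [map_mul, map_sub, map_add, map_one, map_zero, map_ofNat,
      Polynomial.C_eq_natCast] at hd ⊢
    push_cast at hd ⊢
    linear_combination hd
  | succ k ih =>
    have hd := congrArg derivative ih
    simp only [derivative_mul, derivative_add, derivative_sub, derivative_one, derivative_X_pow,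
      derivative_X, sub_zero, derivative_C, ← u_succ, zero_mul, mul_one] at hd
    simp only [map_mul, map_sub, map_add, map_one, map_zero, map_ofNat,
      Polynomial.C_eq_natCast] at hd ⊢
    push_cast at hd ⊢
    linear_combination hd

/-- the Legendre ODE for the Rodrigues kernel derivative -/
lemma ode_u (n : ℕ) : ((X:Polynomial ℝ)^2-1) * u n (n+2) + C 2 * X * u n (n+1)
    = C ((n:ℝ)*((n:ℝ)+1)) * u n n := by
  have h := Tk n n
  simp only [map_mul, map_sub, map_add, map_one, map_zero, map_ofNat,
    Polynomial.C_eq_natCast] at h ⊢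
  linear_combination h

lemma p_eq (n k : ℕ) : p n k = C (1 / ((2 : ℝ) ^ n * (Nat.factorial n : ℝ))) * u n (n + k) := by
  show derivative^[k] (legendreP n) = _
  rw [legendreP, Polynomial.iterate_derivative_C_mul, ← Function.iterate_add_apply,
    show k + n = n + k from Nat.add_comm k n]

lemma ode_p (n : ℕ) : ((X:Polynomial ℝ)^2-1) * p n 2 + C 2 * X * p n 1
    = C ((n:ℝ)*((n:ℝ)+1)) * p n 0 := by
  simp only [p_eq, Nat.add_zero]
  have h := ode_u n
  set c := C (1 / ((2 : ℝ) ^ n * (Nat.factorial n : ℝ)))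
  linear_combination c * h

lemma E (n : ℕ) : ∀ k : ℕ, ((X:Polynomial ℝ)^2-1) * p n (k+2) + C (2*((k:ℝ)+1)) * X * p n (k+1)
    = C ((n:ℝ)*((n:ℝ)+1) - (k:ℝ)*((k:ℝ)+1)) * p n k := by
  intro k
  induction k with
  | zero =>
    have h := ode_p n
    simp only [map_mul, map_sub, map_add, map_one, map_zero, map_ofNat,
      Polynomial.C_eq_natCast] at h ⊢
    push_cast at h ⊢
    linear_combination h
  | succ k ih =>
    have hd := congrArg derivative ih
    simp only [derivative_mul, derivative_add, derivative_sub, derivative_one, derivative_X_pow,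
      derivative_X, sub_zero, derivative_C, ← p_succ, zero_mul, mul_one] at hd
    simp only [map_mul, map_sub, map_add, map_one, map_zero, map_ofNat,
      Polynomial.C_eq_natCast] at hd ⊢
    push_cast at hd ⊢
    linear_combination hd

lemma deriv_key (n i : ℕ) :
    derivative ((1 - (X:Polynomial ℝ)^2)^(i+1) * p n (i+1))
      = - C ((n:ℝ)*((n:ℝ)+1) - (i:ℝ)*((i:ℝ)+1)) * ((1 - (X:Polynomial ℝ)^2)^i * p n i) := by
  have hE := E n i
  rw [derivative_mul, derivative_pow, ← p_succ]
  simp only [derivative_sub, derivative_one, derivative_X_pow, zero_sub, Nat.add_sub_cancel]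
  simp only [map_mul, map_sub, map_add, map_one, map_zero, map_ofNat,
    Polynomial.C_eq_natCast] at hE ⊢
  push_cast at hE ⊢
  linear_combination (-((1 - (X:Polynomial ℝ)^2)^i)) * hE

/-! ### The integral recursion -/

noncomputable def I (n n' j : ℕ) : ℝ :=
  ∫ x in (-1:ℝ)..1, ((1 - (X:Polynomial ℝ)^2)^j * p n j * p n' j).eval x

lemma I_zero (n n' : ℕ) : I n n' 0 = if n = n' then 2 / (2*(n:ℝ)+1) else 0 := by
  rw [← legendre_orth n n']
  unfold I
  apply intervalIntegral.integral_congr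
  intro x _
  show eval x ((1 - (X:Polynomial ℝ)^2)^0 * derivative^[0] (legendreP n)
    * derivative^[0] (legendreP n')) = _
  simp

lemma I_succ (n n' i : ℕ) :
    I n n' (i+1) = ((n:ℝ)*((n:ℝ)+1) - (i:ℝ)*((i:ℝ)+1)) * I n n' i := by
  unfold I
  have e1 : ((1 - (X:Polynomial ℝ)^2)^(i+1) * p n (i+1) * p n' (i+1))
      = ((1 - (X:Polynomial ℝ)^2)^(i+1) * p n (i+1)) * derivative (p n' i) := by
    rw [← p_succ]
  have hb : ∀ x : ℝ, x^2 = 1 →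
      (((1 - (X:Polynomial ℝ)^2)^(i+1) * p n (i+1)) * p n' i).eval x = 0 := by
    intro x hx
    simp [hx]
  have h2 := ibp ((1 - (X:Polynomial ℝ)^2)^(i+1) * p n (i+1)) (p n' i)
    (by rw [hb 1 (by norm_num), hb (-1) (by norm_num)])
  have e2 : ∫ x in (-1:ℝ)..1, ((1 - (X:Polynomial ℝ)^2)^(i+1) * p n (i+1) * p n' (i+1)).eval x
      = - ∫ x in (-1:ℝ)..1,
          (derivative ((1 - (X:Polynomial ℝ)^2)^(i+1) * p n (i+1)) * p n' i).eval x := by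
    rw [e1]
    exact h2
  rw [e2, deriv_key n i]
  rw [← intervalIntegral.integral_const_mul, ← intervalIntegral.integral_neg]
  apply intervalIntegral.integral_congr
  intro x _
  simp only [eval_mul, eval_neg, eval_C]
  ring

lemma I_closed (n n' : ℕ) : ∀ m ≤ n,
    I n n' m = ((Nat.factorial (n+m) : ℝ) / (Nat.factorial (n-m) : ℝ)) * I n n' 0 := by
  intro m
  induction m with
  | zero =>
    intro _
    rw [Nat.add_zero, Nat.sub_zero, div_self (Nat.cast_ne_zero.mpr (Nat.factorial_ne_zero n)),
      one_mul]
  | succ i ih =>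
    intro hm
    rw [I_succ, ih (by omega)]
    have h1 : (Nat.factorial (n+(i+1)) : ℝ) = ((n:ℝ)+(i:ℝ)+1) * (Nat.factorial (n+i) : ℝ) := by
      rw [show n+(i+1) = (n+i)+1 from rfl, Nat.factorial_succ]; push_cast; ring
    have h2 : (Nat.factorial (n-i) : ℝ) = ((n:ℝ)-(i:ℝ)) * (Nat.factorial (n-(i+1)) : ℝ) := by
      rw [show n-i = (n-(i+1))+1 by omega, Nat.factorial_succ]
      push_cast [Nat.cast_sub (show i+1 ≤ n from hm)]
      ring
    have h3 : (Nat.factorial (n-(i+1)) : ℝ) ≠ 0 := Nat.cast_ne_zero.mpr (Nat.factorial_ne_zero _)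
    have h4 : ((n:ℝ)-(i:ℝ)) ≠ 0 := by
      have : (i:ℝ) + 1 ≤ (n:ℝ) := by exact_mod_cast hm
      intro hc; linarith
    rw [h1, h2]
    field_simp
    ring

/-! ### Degree bounds -/

lemma natDegree_p_le (n k : ℕ) : (p n k).natDegree ≤ n - k := by
  have h1 : (legendreP n).natDegree ≤ n := by
    rw [legendreP]
    refine le_trans (natDegree_C_mul_le _ _) ?_
    have := natDegree_iterate_derivative (((X:Polynomial ℝ)^2-1)^n) n
    rw [natDegree_w] at this
    omega
  have h2 := natDegree_iterate_derivative (legendreP n) k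
  show (derivative^[k] (legendreP n)).natDegree ≤ n - k
  omega

lemma natDegree_one_sub_sq : ((1 : Polynomial ℝ) - X^2).natDegree ≤ 2 := by
  refine le_trans (natDegree_sub_le _ _) ?_
  simp [natDegree_one, natDegree_X_pow]

end AL

/-- Discrete orthogonality of the associated Legendre functions under Gauss–Legendre
quadrature: for `m ≤ n, n' ≤ Q-1` with `n + n' ≤ 2Q-1`,
`Σ_k ω_k P_{n,m}(t_k) P_{n',m}(t_k) = (2/(2n+1)) ((n+m)!/(n-m)!) δ_n^{n'}`. -/
theorem assocLegendre_discrete_orthogonality (Q : ℕ) (hQ : 1 ≤ Q) (t ω : ℕ → ℝ)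
    (ht : ∀ k < Q, t k ∈ Set.Icc (-1 : ℝ) 1)
    (hroot : ∀ k < Q, (legendreP Q).eval (t k) = 0)
    (hdist : ∀ i j, i < j → j < Q → t i < t j)
    (hexact : ∀ p : Polynomial ℝ, p.natDegree ≤ 2 * Q - 1 →
      (∫ x in (-1 : ℝ)..1, p.eval x) = ∑ k ∈ Finset.range Q, ω k * p.eval (t k))
    (m n n' : ℕ) (hmn : m ≤ n) (hmn' : m ≤ n')
    (hnQ : n ≤ Q - 1) (hn'Q : n' ≤ Q - 1) (hsum : n + n' ≤ 2 * Q - 1) :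
    (∑ k ∈ Finset.range Q, ω k * assocLegendre n m (t k) * assocLegendre n' m (t k))
      = if n = n' then
          (2 / (2 * (n : ℝ) + 1)) * (Nat.factorial (n + m) : ℝ) /
            (Nat.factorial (n - m) : ℝ)
        else 0 := by
  classical
  set r : Polynomial ℝ := (1 - (X:Polynomial ℝ)^2)^m * AL.p n m * AL.p n' m with hr
  have hdeg : r.natDegree ≤ 2 * Q - 1 := by
    have h1 : r.natDegree ≤ ((1 - (X:Polynomial ℝ)^2)^m).natDegree
        + (AL.p n m).natDegree + (AL.p n' m).natDegree := by
      refine le_trans (natDegree_mul_le) ?_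
      have := natDegree_mul_le (p := (1 - (X:Polynomial ℝ)^2)^m) (q := AL.p n m)
      omega
    have h2 : ((1 - (X:Polynomial ℝ)^2)^m).natDegree ≤ 2 * m := by
      refine le_trans (natDegree_pow_le) ?_
      have := AL.natDegree_one_sub_sq
      nlinarith
    have h3 := AL.natDegree_p_le n m
    have h4 := AL.natDegree_p_le n' m
    omega
  -- rewrite the sum
  have hterm : ∀ k ∈ Finset.range Q,
      ω k * assocLegendre n m (t k) * assocLegendre n' m (t k) = ω k * r.eval (t k) := by
    intro k hk
    rw [Finset.mem_range] at hk
    obtain ⟨h1, h2⟩ := ht k hk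
    have hnn : (0:ℝ) ≤ 1 - (t k)^2 := by nlinarith
    have hs : (Real.sqrt (1 - (t k)^2))^m * (Real.sqrt (1 - (t k)^2))^m
        = (1 - (t k)^2)^m := by
      rw [← pow_add, show m+m = 2*m by ring, pow_mul, Real.sq_sqrt hnn]
    rw [assocLegendre, assocLegendre, hr]
    simp only [eval_mul, eval_pow, eval_sub, eval_one, eval_X]
    calc ω k * ((Real.sqrt (1 - (t k)^2))^m * (AL.p n m).eval (t k))
          * ((Real.sqrt (1 - (t k)^2))^m * (AL.p n' m).eval (t k))
        = ω k * ((Real.sqrt (1 - (t k)^2))^m * (Real.sqrt (1 - (t k)^2))^m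
            * ((AL.p n m).eval (t k) * (AL.p n' m).eval (t k))) := by ring
      _ = ω k * ((1 - (t k)^2)^m * (AL.p n m).eval (t k) * (AL.p n' m).eval (t k)) := by
          rw [hs]; ring
      _ = _ := by ring
  rw [Finset.sum_congr rfl hterm, ← hexact r hdeg]
  have : (∫ x in (-1:ℝ)..1, r.eval x) = AL.I n n' m := rfl
  rw [this, AL.I_closed n n' m hmn, AL.I_zero]
  rcases eq_or_ne n n' with h | h
  · rw [if_pos h, if_pos h]; ring
  · rw [if_neg h, if_neg h]; ring
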